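/- Let N be a positive integer and a be an element of (ℤ/Nℤ)* with multiplicative order m := ord_N(a). Then ord_p(a) = m for every prime p dividing N if and only if gcd(N, a^(m/r) - 1) = 1 for every prime r dividing m. -/

import Mathlib

lemma ord_dvd_iff_aux (a n k : ℕ) :
    orderOf (a : ZMod n) ∣ k ↔ (n : ℤ) ∣ (a : ℤ) ^ k - 1 := by
  rw [orderOf_dvd_iff_pow_eq_one, ← ZMod.intCast_zmod_eq_zero_iff_dvd]
  push_cast
  rw [sub_eq_zero]

/-- Hittmeir's order lemma: `ord_p(a) = ord_N(a)` for every prime `p ∣ N` iff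
`gcd(N, a^(m/r) - 1) = 1` for every prime `r ∣ m`. -/
theorem order_all_primes_iff (N a : ℕ) (hN : 0 < N) (ha : Nat.Coprime a N)
    (m : ℕ) (hm : m = orderOf (a : ZMod N)) :
    (∀ p : ℕ, p.Prime → p ∣ N → orderOf (a : ZMod p) = m) ↔
      (∀ r : ℕ, r.Prime → r ∣ m → Int.gcd (N : ℤ) ((a : ℤ) ^ (m / r) - 1) = 1) := by
  haveI : NeZero N := ⟨hN.ne'⟩
  have hmpos : 0 < m := by
    rw [hm, ← ZMod.coe_unitOfCoprime a ha, orderOf_units]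
    exact orderOf_pos _
  have hmdvd : (N : ℤ) ∣ (a : ℤ) ^ m - 1 :=
    (ord_dvd_iff_aux a N m).mp (hm ▸ dvd_refl _)
  constructor
  · intro h r hr hrm
    by_contra hg
    obtain ⟨p, hp, hpg⟩ := Nat.exists_prime_and_dvd hg
    have hpgz : (p : ℤ) ∣ (Int.gcd (N : ℤ) ((a : ℤ) ^ (m / r) - 1) : ℤ) :=
      Int.natCast_dvd_natCast.mpr hpg
    have hpN : p ∣ N := by
      exact_mod_cast hpgz.trans (Int.gcd_dvd_left _ _)
    have hpdvd : (p : ℤ) ∣ (a : ℤ) ^ (m / r) - 1 := hpgz.trans (Int.gcd_dvd_right _ _)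
    have hdv : m ∣ m / r := by
      have h' := (ord_dvd_iff_aux a p (m / r)).mpr hpdvd
      rwa [h p hp hpN] at h'
    have h1 : 0 < m / r := Nat.div_pos (Nat.le_of_dvd hmpos hrm) hr.pos
    have h2 : m / r < m := Nat.div_lt_self hmpos hr.one_lt
    exact absurd (Nat.le_of_dvd h1 hdv) (not_le.mpr h2)
  · intro h p hp hpN
    set d := orderOf (a : ZMod p) with hd
    have hdm : d ∣ m :=
      (ord_dvd_iff_aux a p m).mpr ((Int.natCast_dvd_natCast.mpr hpN).trans hmdvd)
    by_contra hne
    have hd0 : 0 < d := Nat.pos_of_dvd_of_pos hdm hmpos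
    obtain ⟨t, ht⟩ := hdm
    have ht1 : t ≠ 1 := by rintro rfl; simp at ht; exact hne ht.symm
    obtain ⟨r, hr, hrt⟩ := Nat.exists_prime_and_dvd ht1
    have hrm : r ∣ m := ht ▸ Dvd.dvd.mul_left hrt d
    obtain ⟨s, hs⟩ := hrt
    have hmr : m / r = d * s := by
      rw [ht, hs, show d * (r * s) = d * s * r by ring, Nat.mul_div_cancel _ hr.pos]
    have hddvd : d ∣ m / r := hmr ▸ Dvd.intro s rfl
    have hp1 : (p : ℤ) ∣ (a : ℤ) ^ (m / r) - 1 := (ord_dvd_iff_aux a p (m / r)).mp hddvd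
    have hgcd := h r hr hrm
    have hpd : (p : ℤ) ∣ ((Int.gcd (N : ℤ) ((a : ℤ) ^ (m / r) - 1) : ℕ) : ℤ) :=
      Int.dvd_coe_gcd (Int.natCast_dvd_natCast.mpr hpN) hp1
    rw [hgcd] at hpd
    have := Int.le_of_dvd one_pos hpd
    have := hp.two_le
    omega
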